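/- arXiv:1006.4319 — 2 statements merged into one kernel-verified Lean document; each statement's English description precedes it below -/
import Mathlib

section
/- For all φ, ψ, α, β ∈ [0, π/2], the quantity Γ(φ,ψ,α,β) = cos φ cos ψ cos α cos β + sin φ sin ψ sin α sin β + sin(φ+ψ) sin(α+β) satisfies Γ ≤ 3/2, with equality if and only if φ = ψ = α = β = π/4. -/
open Real

private lemma key_id (φ ψ α β : ℝ) :
    cos φ * cos ψ * cos α * cos β + sin φ * sin ψ * sin α * sin β
      = (cos (φ - ψ) * cos (α - β) + cos (φ + ψ) * cos (α + β)) / 2 := by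
  rw [cos_sub, cos_sub, cos_add, cos_add]; ring

private lemma cos_eq_one_small {x : ℝ} (h1 : -(π/2) ≤ x) (h2 : x ≤ π) (h : Real.cos x = 1) :
    x = 0 := by
  have hπ := pi_pos
  exact (Real.cos_eq_one_iff_of_lt_of_lt (x := x) (by linarith) (by linarith)).1 h

private lemma alg_le {c1 c2 u v s t : ℝ} (hc1nn : 0 ≤ c1) (hc1le : c1 ≤ 1)
    (hc2nn : 0 ≤ c2) (hc2le : c2 ≤ 1) (hsnn : 0 ≤ s) (hsle : s ≤ 1)
    (htnn : 0 ≤ t) (htle : t ≤ 1) (hp1 : s ^ 2 + u ^ 2 = 1) (hp2 : t ^ 2 + v ^ 2 = 1) :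
    (c1 * c2 + u * v) / 2 + s * t ≤ 3 / 2 := by
  have hcc : c1 * c2 ≤ 1 := by nlinarith
  have huv : u * v ≤ 1 - (s ^ 2 + t ^ 2) / 2 := by nlinarith [sq_nonneg (u - v)]
  have hst : 2 * (s * t) ≤ s ^ 2 + t ^ 2 := by nlinarith [sq_nonneg (s - t)]
  have hssq : s ^ 2 ≤ 1 := by nlinarith
  have htsq : t ^ 2 ≤ 1 := by nlinarith
  linarith

private lemma alg_eq {c1 c2 u v s t : ℝ} (hc1nn : 0 ≤ c1) (hc1le : c1 ≤ 1)
    (hc2nn : 0 ≤ c2) (hc2le : c2 ≤ 1) (hsnn : 0 ≤ s) (hsle : s ≤ 1)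
    (htnn : 0 ≤ t) (htle : t ≤ 1) (hp1 : s ^ 2 + u ^ 2 = 1) (hp2 : t ^ 2 + v ^ 2 = 1)
    (heq : (c1 * c2 + u * v) / 2 + s * t = 3 / 2) :
    c1 = 1 ∧ c2 = 1 ∧ s = 1 ∧ t = 1 := by
  have hcc : c1 * c2 ≤ 1 := by nlinarith
  have huv : u * v ≤ 1 - (s ^ 2 + t ^ 2) / 2 := by nlinarith [sq_nonneg (u - v)]
  have hst : 2 * (s * t) ≤ s ^ 2 + t ^ 2 := by nlinarith [sq_nonneg (s - t)]
  have hssq : s ^ 2 ≤ 1 := by nlinarith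
  have htsq : t ^ 2 ≤ 1 := by nlinarith
  have hsum : 2 ≤ s ^ 2 + t ^ 2 := by linarith
  have hs1 : s = 1 := le_antisymm hsle (by nlinarith)
  have ht1 : t = 1 := le_antisymm htle (by nlinarith)
  have hs2 : s ^ 2 = 1 := by rw [hs1]; norm_num
  have ht2 : t ^ 2 = 1 := by rw [ht1]; norm_num
  have hu0 : u = 0 := pow_eq_zero_iff (n := 2) (by norm_num) |>.1 (by linarith)
  have hv0 : v = 0 := pow_eq_zero_iff (n := 2) (by norm_num) |>.1 (by linarith)
  have hcc1 : c1 * c2 = 1 := by rw [hs1, ht1, hu0, hv0] at heq; linarith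
  have hc11 : c1 = 1 := le_antisymm hc1le (by nlinarith)
  have hc21 : c2 = 1 := le_antisymm hc2le (by nlinarith)
  exact ⟨hc11, hc21, hs1, ht1⟩

theorem stmt_0 (φ ψ α β : ℝ)
    (hφ : φ ∈ Set.Icc 0 (π / 2)) (hψ : ψ ∈ Set.Icc 0 (π / 2))
    (hα : α ∈ Set.Icc 0 (π / 2)) (hβ : β ∈ Set.Icc 0 (π / 2)) :
    cos φ * cos ψ * cos α * cos β + sin φ * sin ψ * sin α * sin β
      + sin (φ + ψ) * sin (α + β) ≤ 3 / 2 ∧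
    (cos φ * cos ψ * cos α * cos β + sin φ * sin ψ * sin α * sin β
      + sin (φ + ψ) * sin (α + β) = 3 / 2 ↔
      φ = π / 4 ∧ ψ = π / 4 ∧ α = π / 4 ∧ β = π / 4) := by
  obtain ⟨hφ0, hφ1⟩ := hφ
  obtain ⟨hψ0, hψ1⟩ := hψ
  obtain ⟨hα0, hα1⟩ := hα
  obtain ⟨hβ0, hβ1⟩ := hβ
  have hπ := pi_pos
  have hid := key_id φ ψ α β
  have hc1nn : 0 ≤ cos (φ - ψ) := cos_nonneg_of_mem_Icc ⟨by linarith, by linarith⟩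
  have hc2nn : 0 ≤ cos (α - β) := cos_nonneg_of_mem_Icc ⟨by linarith, by linarith⟩
  have hc1le : cos (φ - ψ) ≤ 1 := cos_le_one _
  have hc2le : cos (α - β) ≤ 1 := cos_le_one _
  have hsle : sin (φ + ψ) ≤ 1 := sin_le_one _
  have htle : sin (α + β) ≤ 1 := sin_le_one _
  have hsnn : 0 ≤ sin (φ + ψ) := sin_nonneg_of_nonneg_of_le_pi (by linarith) (by linarith)
  have htnn : 0 ≤ sin (α + β) := sin_nonneg_of_nonneg_of_le_pi (by linarith) (by linarith)
  have hp1 : sin (φ + ψ) ^ 2 + cos (φ + ψ) ^ 2 = 1 := sin_sq_add_cos_sq _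
  have hp2 : sin (α + β) ^ 2 + cos (α + β) ^ 2 = 1 := sin_sq_add_cos_sq _
  have hle := alg_le hc1nn hc1le hc2nn hc2le hsnn hsle htnn htle hp1 hp2
  rw [hid]
  refine ⟨hle, ?_, ?_⟩
  · intro heq
    obtain ⟨hc11, hc21, hs1, ht1⟩ :=
      alg_eq hc1nn hc1le hc2nn hc2le hsnn hsle htnn htle hp1 hp2 heq
    have h1 : φ - ψ = 0 := cos_eq_one_small (by linarith) (by linarith) hc11
    have h2 : α - β = 0 := cos_eq_one_small (by linarith) (by linarith) hc21
    have h3 : φ + ψ = π / 2 := by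
      have hx : cos (π / 2 - (φ + ψ)) = 1 := by rw [cos_pi_div_two_sub]; exact hs1
      have h := cos_eq_one_small (by linarith) (by linarith) hx
      linarith
    have h4 : α + β = π / 2 := by
      have hx : cos (π / 2 - (α + β)) = 1 := by rw [cos_pi_div_two_sub]; exact ht1
      have h := cos_eq_one_small (by linarith) (by linarith) hx
      linarith
    exact ⟨by linarith, by linarith, by linarith, by linarith⟩
  · rintro ⟨rfl, rfl, rfl, rfl⟩
    have h2 : Real.sqrt 2 ^ 2 = 2 := Real.sq_sqrt (by norm_num)
    rw [show π / 4 + π / 4 = π / 2 by ring, show π / 4 - π / 4 = 0 by ring,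
      sin_pi_div_two, cos_pi_div_two, cos_zero]
    norm_num
end

section
/- In any metric space, any finite set S of cardinality N ≥ 2 and diameter r > 0 can be partitioned into two disjoint nonempty subsets S' and S'' with dist(S', S'') ≥ r/(2N). Moreover, given two points s', s'' ∈ S with dist(s', s'') = r, the partition can be chosen so that s' ∈ S' and s'' ∈ S''. -/
open Metric

theorem stmt_2 {X : Type*} [MetricSpace X] [DecidableEq X] (S : Finset X) (r : ℝ)
    (hN : 2 ≤ S.card) (hr : 0 < r)
    (hdiam : Metric.diam (S : Set X) = r)
    (s' s'' : X) (hs' : s' ∈ S) (hs'' : s'' ∈ S) (hdist : dist s' s'' = r) :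
    ∃ S' S'' : Finset X, S' ∪ S'' = S ∧ Disjoint S' S'' ∧
      S'.Nonempty ∧ S''.Nonempty ∧ s' ∈ S' ∧ s'' ∈ S'' ∧
      ∀ x ∈ S', ∀ y ∈ S'', r / (2 * S.card) ≤ dist x y := by
  classical
  set N := S.card with hNdef
  have hN0 : (0:ℝ) < N := by
    have : 0 < N := by omega
    exact_mod_cast this
  set δ := r / (2 * N) with hδdef
  have hδ : 0 < δ := by
    apply div_pos hr; linarith
  have hrδ : r = 2 * N * δ := by
    rw [hδdef]; field_simp
  have hne : s' ≠ s'' := by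
    intro h; rw [h, dist_self] at hdist; linarith
  -- pigeonhole: some interval ((2k-2)δ, (2k-1)δ] contains no dist s' x
  have key : ∃ k ∈ Finset.Icc 1 N, ∀ x ∈ S,
      dist s' x ∉ Set.Ioc ((2*(k:ℝ)-2)*δ) ((2*(k:ℝ)-1)*δ) := by
    by_contra hcon
    push_neg at hcon
    choose g hgS hgI using hcon
    have hcard : (S \ {s', s''}).card < ((Finset.Icc 1 N).attach).card := by
      rw [Finset.card_attach, Nat.card_Icc]
      have hsub : ({s', s''} : Finset X) ⊆ S := by
        intro z hz; simp at hz; rcases hz with h | h <;> simp [h, hs', hs'']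
      rw [Finset.card_sdiff_of_subset hsub, Finset.card_pair hne]
      omega
    have hmaps : ∀ a ∈ (Finset.Icc 1 N).attach,
        g a.1 a.2 ∈ S \ {s', s''} := by
      intro a _
      have hk := Finset.mem_Icc.1 a.2
      have hk1 : (1:ℝ) ≤ (a.1:ℝ) := by exact_mod_cast hk.1
      have hkN : (a.1:ℝ) ≤ (N:ℝ) := by exact_mod_cast hk.2
      have hI := hgI a.1 a.2
      rw [Set.mem_Ioc] at hI
      rw [Finset.mem_sdiff]
      refine ⟨hgS a.1 a.2, ?_⟩
      simp only [Finset.mem_insert, Finset.mem_singleton]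
      push_neg
      constructor
      · intro h
        rw [← h, dist_self] at hI
        nlinarith [hI.1]
      · intro h
        rw [h, hdist, hrδ] at hI
        nlinarith [hI.2]
    obtain ⟨a, _, b, _, hab, heq⟩ :=
      Finset.exists_ne_map_eq_of_card_lt_of_maps_to hcard hmaps
    have hIa := hgI a.1 a.2
    have hIb := hgI b.1 b.2
    rw [heq] at hIa
    rw [Set.mem_Ioc] at hIa hIb
    have hkne : a.1 ≠ b.1 := fun h => hab (Subtype.ext h)
    rcases lt_or_gt_of_ne hkne with h | h
    · have : (a.1:ℝ) + 1 ≤ (b.1:ℝ) := by exact_mod_cast h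
      nlinarith [hIa.2, hIb.1]
    · have : (b.1:ℝ) + 1 ≤ (a.1:ℝ) := by exact_mod_cast h
      nlinarith [hIa.1, hIb.2]
  obtain ⟨k, hk, hkgap⟩ := key
  rw [Finset.mem_Icc] at hk
  have hk1 : (1:ℝ) ≤ (k:ℝ) := by exact_mod_cast hk.1
  have hkN : (k:ℝ) ≤ (N:ℝ) := by exact_mod_cast hk.2
  refine ⟨S.filter (fun x => dist s' x ≤ (2*(k:ℝ)-2)*δ),
          S.filter (fun x => ¬ dist s' x ≤ (2*(k:ℝ)-2)*δ), ?_, ?_, ?_, ?_, ?_, ?_, ?_⟩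
  · exact Finset.filter_union_filter_not_eq _ S
  · exact Finset.disjoint_filter_filter_not S S _
  · exact ⟨s', Finset.mem_filter.2 ⟨hs', by rw [dist_self]; nlinarith⟩⟩
  · refine ⟨s'', Finset.mem_filter.2 ⟨hs'', ?_⟩⟩
    rw [hdist, hrδ]; push_neg; nlinarith
  · exact Finset.mem_filter.2 ⟨hs', by rw [dist_self]; nlinarith⟩
  · refine Finset.mem_filter.2 ⟨hs'', ?_⟩
    rw [hdist, hrδ]; push_neg; nlinarith
  · intro x hx y hy
    rw [Finset.mem_filter] at hx hy
    have hygap := hkgap y hy.1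
    rw [Set.mem_Ioc] at hygap
    push_neg at hygap
    have hy1 : (2*(k:ℝ)-2)*δ < dist s' y := lt_of_not_ge hy.2
    have hy2 : (2*(k:ℝ)-1)*δ < dist s' y := hygap hy1
    have htri : dist s' y ≤ dist s' x + dist x y := dist_triangle _ _ _
    show δ ≤ dist x y
    nlinarith [hx.2]
end
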